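/- For real q > 1, s > 0, t > 0 and integer n ≥ 0, ∫₀¹ (q^{n+x+t} - 1)^{-s} dx = (1/(s log q)) [ (q^{n+t}-1)^{1-s} q^{-(n+t)} ₂F₁(1,1;s+1;q^{-n-t}) - (q^{n+t+1}-1)^{1-s} q^{-(n+t+1)} ₂F₁(1,1;s+1;q^{-n-t-1}) ]. -/

import Mathlib

/-- The Pochhammer symbol `(a)_k = a(a+1)⋯(a+k-1)` for real `a`. -/
noncomputable def poch (a : ℝ) (k : ℕ) : ℝ := ∏ j ∈ Finset.range k, (a + j)

/-- The hypergeometric series `₂F₁(1,1;c;z) = ∑_{k=0}^∞ (k!/(c)_k) z^k`. -/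
noncomputable def F211 (c z : ℝ) : ℝ := ∑' k : ℕ, (Nat.factorial k : ℝ) / poch c k * z ^ k

namespace HypAux

open Real

noncomputable def a (s : ℝ) (k : ℕ) : ℝ := (Nat.factorial k : ℝ) / poch (s + 1) k

variable {s : ℝ}

lemma poch_zero (c : ℝ) : poch c 0 = 1 := by simp [poch]

lemma poch_succ (c : ℝ) (k : ℕ) : poch c (k + 1) = poch c k * (c + k) := by
  simp [poch, Finset.prod_range_succ]

lemma poch_pos (hs : 0 < s) (k : ℕ) : 0 < poch (s + 1) k :=
  Finset.prod_pos fun j _ => by positivity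

lemma fact_le_poch (hs : 0 < s) (k : ℕ) : (Nat.factorial k : ℝ) ≤ poch (s + 1) k := by
  have : (Nat.factorial k : ℝ) = ∏ j ∈ Finset.range k, ((j : ℝ) + 1) := by
    rw [← Finset.prod_range_add_one_eq_factorial]
    push_cast
    exact Finset.prod_congr rfl fun j _ => by ring
  rw [this, poch]
  apply Finset.prod_le_prod
  · intro j _; positivity
  · intro j _; linarith

lemma a_pos (hs : 0 < s) (k : ℕ) : 0 < a s k :=
  div_pos (by positivity) (poch_pos hs k)

lemma a_le_one (hs : 0 < s) (k : ℕ) : a s k ≤ 1 :=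
  (div_le_one (poch_pos hs k)).mpr (fact_le_poch hs k)

lemma a_zero : a s 0 = 1 := by simp [a, poch_zero]

lemma a_rec (hs : 0 < s) (k : ℕ) : (s + k + 1) * a s (k + 1) = (k + 1) * a s k := by
  have hp := (poch_pos hs k).ne'
  have hsk : s + 1 + (k : ℝ) ≠ 0 := by positivity
  rw [a, a, poch_succ, Nat.factorial_succ]
  push_cast
  field_simp
  ring

lemma summable_maj {r : ℝ} (h1 : |r| < 1) (C : ℝ) :
    Summable fun k : ℕ => C * ((k : ℝ) + 1) * r ^ k := by
  have h1' : ‖r‖ < 1 := h1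
  have h2 := summable_pow_mul_geometric_of_norm_lt_one (R := ℝ) 1 h1'
  have h3 := summable_geometric_of_norm_lt_one h1'
  refine ((h2.add h3).mul_left C).congr fun k => ?_
  ring

lemma summable_lin {z : ℝ} (hz : |z| < 1) (f : ℕ → ℝ) (C : ℝ)
    (hf : ∀ k, |f k| ≤ C * ((k : ℝ) + 1)) : Summable fun k => f k * z ^ k := by
  refine Summable.of_norm_bounded (summable_maj (r := |z|) (by rwa [abs_abs]) C) fun k => ?_
  rw [norm_mul, norm_pow, Real.norm_eq_abs, Real.norm_eq_abs]
  have h0 : (0:ℝ) ≤ |z| ^ k := by positivity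
  calc |f k| * |z| ^ k ≤ (C * ((k:ℝ)+1)) * |z| ^ k := by
        exact mul_le_mul_of_nonneg_right (hf k) h0
    _ = C * ((k:ℝ)+1) * |z| ^ k := by ring

variable {z : ℝ}

lemma summable_F (hs : 0 < s) (hz : |z| < 1) : Summable fun k => a s k * z ^ k := by
  refine summable_lin hz _ 1 fun k => ?_
  rw [abs_of_pos (a_pos hs k)]
  have h1 := a_le_one hs k
  have h2 : (0:ℝ) ≤ (k:ℝ) := Nat.cast_nonneg k
  nlinarith

lemma summable_kF (hs : 0 < s) (hz : |z| < 1) :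
    Summable fun k : ℕ => (k:ℝ) * a s k * z ^ k := by
  refine summable_lin hz _ 1 fun k => ?_
  have h0 := a_pos hs k
  have h1 := a_le_one hs k
  have h2 : (0:ℝ) ≤ (k:ℝ) := Nat.cast_nonneg k
  rw [abs_of_nonneg (by positivity)]
  nlinarith

lemma summable_T (hs : 0 < s) (hz : |z| < 1) :
    Summable fun k : ℕ => (s + (k:ℝ)) * a s k * z ^ k := by
  refine summable_lin hz _ (s + 1) fun k => ?_
  have h0 := a_pos hs k
  have h1 := a_le_one hs k
  have h2 : (0:ℝ) ≤ (k:ℝ) := Nat.cast_nonneg k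
  rw [abs_of_nonneg (by positivity)]
  nlinarith

lemma F_eq (w : ℝ) : F211 (s + 1) w = ∑' k : ℕ, a s k * w ^ k := rfl

lemma summable_kr {r : ℝ} (h0 : 0 ≤ r) (h1 : r < 1) :
    Summable fun k : ℕ => (k:ℝ) * r ^ (k - 1) := by
  rw [← summable_nat_add_iff 1]
  refine (summable_maj (r := r) (by rwa [abs_of_nonneg h0]) 1).congr fun k => ?_
  simp only [Nat.add_sub_cancel]
  push_cast
  ring

lemma summable_deriv_terms (hs : 0 < s) (hz : |z| < 1) :
    Summable fun k : ℕ => a s k * ((k:ℝ) * z ^ (k - 1)) := by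
  refine Summable.of_norm_bounded (summable_kr (abs_nonneg z) hz) fun k => ?_
  rw [Real.norm_eq_abs, abs_mul, abs_mul, abs_of_pos (a_pos hs k), abs_of_nonneg (Nat.cast_nonneg k : (0:ℝ) ≤ k), abs_pow]
  have h1 := a_le_one hs k
  have h0 := a_pos hs k
  have h2 : (0:ℝ) ≤ (k:ℝ) := Nat.cast_nonneg k
  have h3 : (0:ℝ) ≤ (k:ℝ) * |z| ^ (k-1) := by positivity
  nlinarith [mul_le_mul_of_nonneg_right h1 h3]

lemma hasDerivAt_F (hs : 0 < s) (hz : |z| < 1) :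
    HasDerivAt (fun w => F211 (s + 1) w)
      (∑' k : ℕ, ((k:ℝ) + 1) * a s (k + 1) * z ^ k) z := by
  obtain ⟨r, hzr, hr1⟩ := exists_between hz
  have hr0 : 0 < r := lt_of_le_of_lt (abs_nonneg z) hzr
  have hu : Summable fun k : ℕ => (k:ℝ) * r ^ (k - 1) := summable_kr hr0.le hr1
  have hmem : z ∈ Metric.ball (0:ℝ) r := by simpa [Real.dist_eq] using hzr
  have key := hasDerivAt_tsum_of_isPreconnected hu Metric.isOpen_ball
    (convex_ball (0:ℝ) r).isPreconnected
    (g := fun k w => a s k * w ^ k) (g' := fun k w => a s k * ((k:ℝ) * w ^ (k - 1)))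
    (fun k w _ => (hasDerivAt_pow k w).const_mul (a s k))
    (fun k w hw => by
      rw [Real.norm_eq_abs, abs_mul, abs_mul, abs_of_pos (a_pos hs k),
        abs_of_nonneg (Nat.cast_nonneg k : (0:ℝ) ≤ k), abs_pow]
      have hwr : |w| ≤ r := by
        have : dist w (0:ℝ) < r := hw
        rw [Real.dist_eq, sub_zero] at this
        exact this.le
      have h1 := a_le_one hs k
      have h0 := a_pos hs k
      have h2 : (0:ℝ) ≤ (k:ℝ) := Nat.cast_nonneg k
      have h3 : |w| ^ (k-1) ≤ r ^ (k-1) := pow_le_pow_left₀ (abs_nonneg w) hwr _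
      have h4 : (0:ℝ) ≤ |w| ^ (k-1) := by positivity
      calc a s k * ((k:ℝ) * |w| ^ (k-1)) ≤ 1 * ((k:ℝ) * |w| ^ (k-1)) :=
            mul_le_mul_of_nonneg_right h1 (by positivity)
        _ = (k:ℝ) * |w| ^ (k-1) := one_mul _
        _ ≤ (k:ℝ) * r ^ (k-1) := mul_le_mul_of_nonneg_left h3 h2)
    hmem (summable_F hs hz) hmem
  have heq : (∑' k : ℕ, a s k * ((k:ℝ) * z ^ (k - 1)))
      = ∑' k : ℕ, ((k:ℝ) + 1) * a s (k + 1) * z ^ k := by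
    rw [(summable_deriv_terms hs hz).tsum_eq_zero_add]
    simp only [Nat.cast_zero, zero_mul, mul_zero, zero_add]
    exact tsum_congr fun k => by
      simp only [Nat.add_sub_cancel]
      push_cast
      ring
  rw [heq] at key
  exact key

lemma ode (hs : 0 < s) (hz : |z| < 1) :
    (1 - z) * (s * F211 (s + 1) z + z * ∑' k : ℕ, ((k:ℝ) + 1) * a s (k + 1) * z ^ k)
      = s + (1 - s) * (z * F211 (s + 1) z) := by
  have hF := summable_F hs hz
  have hkF := summable_kF hs hz
  have hT := summable_T hs hz
  have hT1 : Summable fun k : ℕ => (s + (k:ℝ) + 1) * a s (k + 1) * z ^ (k + 1) := by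
    refine ((summable_nat_add_iff 1).2 hT).congr fun k => ?_
    push_cast
    ring
  have hT0 : Summable fun k : ℕ => (s + (k:ℝ)) * a s k * z ^ (k + 1) :=
    (hT.mul_left z).congr fun k => by ring
  have step1 : (∑' k : ℕ, (k:ℝ) * a s k * z ^ k)
      = z * ∑' k : ℕ, ((k:ℝ) + 1) * a s (k + 1) * z ^ k := by
    rw [← tsum_mul_left, hkF.tsum_eq_zero_add]
    simp only [Nat.cast_zero, zero_mul, zero_add]
    exact tsum_congr fun k => by push_cast; ring
  have step2 : s * F211 (s + 1) z + z * (∑' k : ℕ, ((k:ℝ) + 1) * a s (k + 1) * z ^ k)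
      = ∑' k : ℕ, (s + (k:ℝ)) * a s k * z ^ k := by
    rw [F_eq, ← step1, ← tsum_mul_left, ← (hF.mul_left s).tsum_add hkF]
    exact tsum_congr fun k => by ring
  have step3 : z * (∑' k : ℕ, (s + (k:ℝ)) * a s k * z ^ k)
      = ∑' k : ℕ, (s + (k:ℝ)) * a s k * z ^ (k + 1) := by
    rw [← tsum_mul_left]
    exact tsum_congr fun k => by ring
  have step4 : (∑' k : ℕ, (s + (k:ℝ)) * a s k * z ^ k)
      = s + ∑' k : ℕ, (s + (k:ℝ) + 1) * a s (k + 1) * z ^ (k + 1) := by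
    rw [hT.tsum_eq_zero_add]
    congr 1
    · simp [a_zero]
    · exact tsum_congr fun k => by push_cast; ring
  have step5 : (∑' k : ℕ, (s + (k:ℝ) + 1) * a s (k + 1) * z ^ (k + 1))
      - (∑' k : ℕ, (s + (k:ℝ)) * a s k * z ^ (k + 1)) = (1 - s) * (z * F211 (s + 1) z) := by
    rw [← hT1.tsum_sub hT0]
    have : ∀ k : ℕ, (s + (k:ℝ) + 1) * a s (k + 1) * z ^ (k + 1)
        - (s + (k:ℝ)) * a s k * z ^ (k + 1) = (1 - s) * (z * (a s k * z ^ k)) := by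
      intro k
      have h := a_rec hs k
      have : (s + (k:ℝ) + 1) * a s (k + 1) = ((k:ℝ) + 1) * a s k := h
      rw [this]
      ring
    rw [tsum_congr this, tsum_mul_left, tsum_mul_left, F_eq]
  have expand : (1 - z) * (s * F211 (s + 1) z + z * ∑' k : ℕ, ((k:ℝ) + 1) * a s (k + 1) * z ^ k)
      = (s * F211 (s + 1) z + z * ∑' k : ℕ, ((k:ℝ) + 1) * a s (k + 1) * z ^ k)
        - z * (s * F211 (s + 1) z + z * ∑' k : ℕ, ((k:ℝ) + 1) * a s (k + 1) * z ^ k) := by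
    ring
  rw [expand, step2, step3, step4]
  linarith [step5]

lemma hasDerivAt_f (hs : 0 < s) {z : ℝ} (h0 : 0 < z) (h1 : z < 1) :
    HasDerivAt (fun w => (1 - w) ^ (1 - s) * w ^ s * F211 (s + 1) w)
      (s * z ^ (s - 1) * (1 - z) ^ (-s)) z := by
  have h1z : 0 < 1 - z := by linarith
  have hzabs : |z| < 1 := abs_lt.2 ⟨by linarith, h1⟩
  have hbase : HasDerivAt (fun w : ℝ => 1 - w) (-1) z := by
    simpa using (hasDerivAt_id z).const_sub 1
  have hA := hbase.rpow_const (p := 1 - s) (Or.inl h1z.ne')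
  have hB : HasDerivAt (fun w : ℝ => w ^ s) (s * z ^ (s - 1)) z :=
    Real.hasDerivAt_rpow_const (Or.inl h0.ne')
  have hC := hasDerivAt_F hs hzabs
  have hD := (hA.mul hB).mul hC
  convert hD using 1 <;> try rfl
  have key := ode hs hzabs
  have e2 : (1 - z) ^ (1 - s - 1) = (1 - z) ^ (-s) := by
    rw [show (1:ℝ) - s - 1 = -s by ring]
  have e1 : (1 - z) ^ (1 - s) = (1 - z) * (1 - z) ^ (-s) := by
    rw [show (1:ℝ) - s = 1 + -s by ring, Real.rpow_add h1z, Real.rpow_one]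
  have e3 : z ^ s = z ^ (s - 1) * z := by
    rw [← Real.rpow_add_one h0.ne' (s - 1), sub_add_cancel]
  simp only [Pi.mul_apply]
  rw [e2, e1, e3]
  linear_combination (-((1 - z) ^ (-s) * z ^ (s - 1))) * key

end HypAux

open HypAux

/-- For `q > 1`, `s > 0`, `t > 0` and `n ≥ 0`,
`∫₀¹ (q^{n+x+t}-1)^{-s} dx` is given by a difference of hypergeometric terms. -/
theorem integral_q_power_term (q s t : ℝ) (n : ℕ) (hq : 1 < q) (hs : 0 < s) (ht : 0 < t) :
    ∫ x in (0 : ℝ)..1, (q ^ ((n : ℝ) + x + t) - 1) ^ (-s)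
      = (1 / (s * Real.log q)) *
        ((q ^ ((n : ℝ) + t) - 1) ^ (1 - s) / q ^ ((n : ℝ) + t)
            * F211 (s + 1) (q ^ (-((n : ℝ) + t)))
          - (q ^ ((n : ℝ) + t + 1) - 1) ^ (1 - s) / q ^ ((n : ℝ) + t + 1)
            * F211 (s + 1) (q ^ (-((n : ℝ) + t + 1)))) := by
  have hq0 : (0:ℝ) < q := by linarith
  have hL : 0 < Real.log q := Real.log_pos hq
  set L := Real.log q with hLdef
  have hy : ∀ x ∈ Set.uIcc (0:ℝ) 1, 0 < (n:ℝ) + x + t := by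
    intro x hx
    rw [Set.uIcc_of_le (by norm_num : (0:ℝ) ≤ 1)] at hx
    have hn : (0:ℝ) ≤ (n:ℝ) := Nat.cast_nonneg n
    have := hx.1
    linarith
  -- key algebraic fact about q^y - 1
  have hqy : ∀ y : ℝ, 0 < y → q ^ y - 1 = (1 - q ^ (-y)) / q ^ (-y) := by
    intro y hy0
    have hne : q ^ (-y) ≠ 0 := (Real.rpow_pos_of_pos hq0 _).ne'
    have hmul : q ^ (-y) * q ^ y = 1 := by
      rw [← Real.rpow_add hq0]
      norm_num
    field_simp
    linarith [hmul]
  -- the antiderivative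
  set H : ℝ → ℝ := fun u => -(1/(s*L)) *
    ((1 - q ^ (-((n:ℝ) + u + t))) ^ (1 - s) * (q ^ (-((n:ℝ) + u + t))) ^ s
      * F211 (s + 1) (q ^ (-((n:ℝ) + u + t)))) with hHdef
  have hH : ∀ x ∈ Set.uIcc (0:ℝ) 1,
      HasDerivAt H ((q ^ ((n:ℝ) + x + t) - 1) ^ (-s)) x := by
    intro x hx
    have hyx : 0 < (n:ℝ) + x + t := hy x hx
    have hw0 : 0 < q ^ (-((n:ℝ) + x + t)) := Real.rpow_pos_of_pos hq0 _
    have hw1 : q ^ (-((n:ℝ) + x + t)) < 1 :=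
      Real.rpow_lt_one_of_one_lt_of_neg hq (by linarith)
    set w := q ^ (-((n:ℝ) + x + t)) with hwdef
    have hinner : HasDerivAt (fun u : ℝ => -((n:ℝ) + u + t)) (-1) x := by
      have h1 : HasDerivAt (fun u : ℝ => (n:ℝ) + u + t) 1 x := by
        simpa using (((hasDerivAt_id x).const_add ((n:ℝ))).add_const t)
      exact h1.neg
    have hZ : HasDerivAt (fun u : ℝ => q ^ (-((n:ℝ) + u + t))) (-(L * w)) x := by
      have h2 := (Real.hasStrictDerivAt_const_rpow hq0
        (-((n:ℝ) + x + t))).hasDerivAt.comp x hinner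
      simp only [Function.comp_def] at h2
      convert h2 using 1 <;> try rfl
      rw [hwdef]
      ring
    have hcomp := (hasDerivAt_f hs hw0 hw1).comp x hZ
    simp only [Function.comp_def] at hcomp
    have hfin := hcomp.const_mul (-(1/(s*L)))
    convert hfin using 1 <;> try rfl
    have hq1 : q ^ ((n:ℝ) + x + t) - 1 = (1 - w) / w := hqy _ hyx
    rw [hq1, Real.div_rpow (by linarith) hw0.le, Real.rpow_neg hw0.le s]
    have hws : w ^ (s - 1) * w = w ^ s := by
      rw [← Real.rpow_add_one hw0.ne' (s - 1), sub_add_cancel]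
    rw [show s * w ^ (s-1) * (1-w) ^ (-s) * -(L*w) = -(s*L*(w^(s-1)*w)*(1-w)^(-s)) by ring, hws]
    have hWs : (0:ℝ) < w ^ s := Real.rpow_pos_of_pos hw0 s
    field_simp
  have hInt : IntervalIntegrable (fun x => (q ^ ((n:ℝ) + x + t) - 1) ^ (-s))
      MeasureTheory.volume 0 1 := by
    apply ContinuousOn.intervalIntegrable
    have c1 : Continuous fun x : ℝ => q ^ ((n:ℝ) + x + t) :=
      Continuous.rpow continuous_const (by continuity) fun x => Or.inl hq0.ne'
    refine ContinuousOn.rpow_const ((c1.continuousOn).sub continuousOn_const)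
      fun x hx => Or.inl ?_
    have h1 : 1 < q ^ ((n:ℝ) + x + t) :=
      (Real.one_lt_rpow_iff_of_pos hq0).2 (Or.inl ⟨hq, hy x hx⟩)
    intro hc
    rw [sub_eq_zero] at hc
    rw [← hc] at h1
    exact lt_irrefl _ h1
  rw [intervalIntegral.integral_eq_sub_of_hasDerivAt hH hInt]
  -- evaluate H 1 - H 0
  have hterm : ∀ y : ℝ, 0 < y →
      (q ^ y - 1) ^ (1 - s) / q ^ y = (1 - q ^ (-y)) ^ (1 - s) * (q ^ (-y)) ^ s := by
    intro y hy0
    have hw0 : 0 < q ^ (-y) := Real.rpow_pos_of_pos hq0 _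
    have hw1 : q ^ (-y) < 1 := Real.rpow_lt_one_of_one_lt_of_neg hq (by linarith)
    set w := q ^ (-y) with hwdef
    have hqyv : q ^ y = w⁻¹ := by
      rw [hwdef, Real.rpow_neg hq0.le, inv_inv]
    rw [hqy y hy0, hqyv, Real.div_rpow (by linarith) hw0.le]
    have hws : w ^ (1 - s) * w ^ s = w := by
      rw [← Real.rpow_add hw0]
      norm_num
    have hWne : w ^ (1 - s) ≠ 0 := (Real.rpow_pos_of_pos hw0 _).ne'
    field_simp
    linear_combination (-(1 - q ^ (-y)) ^ (1 - s)) * hws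
  rw [hHdef]
  simp only []
  have e0 : (n:ℝ) + 0 + t = (n:ℝ) + t := by ring
  have e1 : (n:ℝ) + 1 + t = (n:ℝ) + t + 1 := by ring
  rw [e0, e1, hterm ((n:ℝ) + t) (by positivity),
    hterm ((n:ℝ) + t + 1) (by positivity)]
  ring
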